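/- Let D be a dense countably infinite mesh in I^n and fix an integer k with 1 ≤ k ≤ n. Let A, C : D → I be functions with A ≤ C, L_k^{(A,C)}(DU) ≥ 0 for all DU ∈ R_k(D), and δ_{k,D}^{(A,C)}(d) = 0 for all d ∈ D. Assume A(v) = C(v) for all vertices v of the unit cube I^n, and that there exists a k-box Q with vertices in D such that V_{C,k}(Q) = v < 0. Then there exist s ∈ {1,…,2^{k−1}} and an enumeration x_1,…,x_{2^{k−1}} of the vertices of Q with multiplicity m_Q(x_i) = −1 such that: for each i ∈ {1,…,s}, A(x_i) < C(x_i) and there exists DU_i ∈ R_k(D) with m_{DU_i}(x_i) > 0 and L_k^{(A,C)}(DU_i)/|m_{DU_i}(x_i)| < |v|/s; and A(x_i) = C(x_i) for each i with s < i ≤ 2^{k−1}. -/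

import Mathlib

open scoped Classical BigOperators

namespace KIncr

/-- Points of the ambient space `ℝ^n`. -/
abbrev Pt (n : ℕ) := Fin n → ℝ

/-- Membership in the unit cube `I^n = [0,1]^n`. -/
def inCube {n : ℕ} (x : Pt n) : Prop := ∀ i, x i ∈ Set.Icc (0:ℝ) 1

/-- The unit cube as a set. -/
def cubeSet (n : ℕ) : Set (Pt n) := {x | inCube x}

/-- Vertices of the unit cube `I^n`. -/
def isCubeVertex {n : ℕ} (x : Pt n) : Prop := ∀ i, x i = 0 ∨ x i = 1

/-- A (formal) box, given by its lower-left and upper-right corners. -/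
structure Box (n : ℕ) where
  lo : Pt n
  hi : Pt n

/-- `R` is a `k`-box in `I^n`: exactly `k` coordinates are nondegenerate. -/
def Box.IsKBox {n : ℕ} (k : ℕ) (R : Box n) : Prop :=
  inCube R.lo ∧ inCube R.hi ∧ (∀ i, R.lo i ≤ R.hi i) ∧
    (Finset.univ.filter (fun i => R.lo i < R.hi i)).card = k

/-- `v` is a vertex of the box `R`. -/
def Box.IsVertex {n : ℕ} (R : Box n) (v : Pt n) : Prop :=
  ∀ i, v i = R.lo i ∨ v i = R.hi i

/-- The (finite) set of vertices of a box. -/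
noncomputable def Box.vertices {n : ℕ} (R : Box n) : Finset (Pt n) :=
  Finset.image (fun ε : Fin n → Bool => fun i => if ε i then R.hi i else R.lo i)
    Finset.univ

/-- The sign `(-1)^(m-(n-k))` of a vertex `v` of a `k`-box, where
`m = #{i : v i = lo i}`;  since `m ≥ n - k`, this equals `(-1)^(m+(n-k))`. -/
noncomputable def Box.sign {n : ℕ} (k : ℕ) (R : Box n) (v : Pt n) : ℤ :=
  (-1) ^ ((Finset.univ.filter (fun i => v i = R.lo i)).card + (n - k))

/-- The multiplicity `m_R(u)` of a point `u` with respect to a `k`-box `R`. -/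
noncomputable def Box.mult {n : ℕ} (k : ℕ) (R : Box n) (u : Pt n) : ℤ :=
  if R.IsVertex u then R.sign k u else 0

/-- `V_{A,k}(R) = ∑_{v ∈ ver R} sign_R(v) · A(v)`. -/
noncomputable def Vvol {n : ℕ} (k : ℕ) (A : Pt n → ℝ) (R : Box n) : ℝ :=
  ∑ v ∈ R.vertices, (R.sign k v : ℝ) * A v

/-- A function is `k`-increasing on `D` if `V_{A,k}(R) ≥ 0` for every `k`-box
with all vertices in `D`. -/
def KIncreasingOn {n : ℕ} (k : ℕ) (D : Set (Pt n)) (A : Pt n → ℝ) : Prop :=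
  ∀ R : Box n, R.IsKBox k → (∀ v ∈ R.vertices, v ∈ D) → 0 ≤ Vvol k A R

/-- The multiplicity `m_DU(u)` of a point with respect to a formal (multiset)
disjoint union of `k`-boxes. -/
noncomputable def multDU {n : ℕ} (k : ℕ) (DU : Multiset (Box n)) (u : Pt n) : ℤ :=
  (DU.map (fun R => R.mult k u)).sum

/-- `DU ∈ R_k(D)`: every box of the multiset `DU` is a `k`-box with all its
vertices in `D`. -/
def memRk {n : ℕ} (k : ℕ) (D : Set (Pt n)) (DU : Multiset (Box n)) : Prop :=
  ∀ R ∈ DU, R.IsKBox k ∧ ∀ v ∈ R.vertices, v ∈ D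

/-- `L_k^{(A,B)}(DU) = ∑_{m_DU(u)>0} m_DU(u)·B(u) + ∑_{m_DU(u)<0} m_DU(u)·A(u)`. -/
noncomputable def Lk {n : ℕ} (k : ℕ) (A B : Pt n → ℝ) (DU : Multiset (Box n)) : ℝ :=
  ∑ u ∈ DU.toFinset.biUnion Box.vertices,
    (if 0 < multDU k DU u then (multDU k DU u : ℝ) * B u
     else if multDU k DU u < 0 then (multDU k DU u : ℝ) * A u else 0)

/-- `P⁻_{k,D}^{(A,B)}(x)`, with the Mathlib convention `sInf ∅ = 0`. -/
noncomputable def Pneg {n : ℕ} (k : ℕ) (D : Set (Pt n)) (A B : Pt n → ℝ) (x : Pt n) : ℝ :=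
  sInf {r : ℝ | ∃ DU : Multiset (Box n), memRk k D DU ∧ multDU k DU x < 0 ∧
    r = Lk k A B DU / |(multDU k DU x : ℝ)|}

/-- `P⁺_{k,D}^{(A,B)}(x)`, with the Mathlib convention `sInf ∅ = 0`. -/
noncomputable def Ppos {n : ℕ} (k : ℕ) (D : Set (Pt n)) (A B : Pt n → ℝ) (x : Pt n) : ℝ :=
  sInf {r : ℝ | ∃ DU : Multiset (Box n), memRk k D DU ∧ 0 < multDU k DU x ∧
    r = Lk k A B DU / |(multDU k DU x : ℝ)|}

/-- `γ_{k,D}^{(A,B)}(x) = min {P⁻_{k,D}^{(A,B)}(x), B(x) - A(x)}`. -/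
noncomputable def gammaK {n : ℕ} (k : ℕ) (D : Set (Pt n)) (A B : Pt n → ℝ) (x : Pt n) : ℝ :=
  min (Pneg k D A B x) (B x - A x)

/-- `δ_{k,D}^{(A,B)}(x) = min {P⁺_{k,D}^{(A,B)}(x), B(x) - A(x)}`. -/
noncomputable def deltaK {n : ℕ} (k : ℕ) (D : Set (Pt n)) (A B : Pt n → ℝ) (x : Pt n) : ℝ :=
  min (Ppos k D A B x) (B x - A x)

/-- A dense countably infinite mesh `D = ∏ δᵢ` in `I^n`. -/
def IsMesh {n : ℕ} (D : Set (Pt n)) : Prop :=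
  ∃ δ : Fin n → Set ℝ,
    (∀ i, δ i ⊆ Set.Icc (0:ℝ) 1 ∧ (δ i).Countable ∧ (δ i).Infinite ∧
      Set.Icc (0:ℝ) 1 ⊆ closure (δ i) ∧ (0:ℝ) ∈ δ i ∧ (1:ℝ) ∈ δ i) ∧
    D = {x : Pt n | ∀ i, x i ∈ δ i}

/-- `A` is grounded: it vanishes whenever some coordinate is `0`. -/
def Grounded {n : ℕ} (A : Pt n → ℝ) : Prop :=
  ∀ x : Pt n, inCube x → (∃ i, x i = 0) → A x = 0

/-- `A` is 1-increasing (increasing in each variable). -/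
def OneIncreasing {n : ℕ} (A : Pt n → ℝ) : Prop :=
  ∀ x y : Pt n, inCube x → inCube y → (∀ i, x i ≤ y i) → A x ≤ A y

/-- `A` has uniform marginals. -/
def UniformMarginals {n : ℕ} (A : Pt n → ℝ) : Prop :=
  ∀ i : Fin n, ∀ t ∈ Set.Icc (0:ℝ) 1, A (Function.update (fun _ => (1:ℝ)) i t) = t

/-- `A` is a standardized function. -/
def Standardized {n : ℕ} (A : Pt n → ℝ) : Prop :=
  Grounded A ∧ OneIncreasing A ∧ A (fun _ => (1:ℝ)) = 1

/-- `A` is a semicopula. -/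
def Semicopula {n : ℕ} (A : Pt n → ℝ) : Prop :=
  Grounded A ∧ OneIncreasing A ∧ UniformMarginals A

/-- `A` maps the unit cube into `I = [0,1]`. -/
def MapsToI {n : ℕ} (A : Pt n → ℝ) : Prop :=
  ∀ x : Pt n, inCube x → A x ∈ Set.Icc (0:ℝ) 1

/-- Condition S: all discontinuities of all sections of `A` lie in the
countable set `S`. -/
def CondS {n : ℕ} (A : Pt n → ℝ) (S : Set ℝ) : Prop :=
  ∀ u : Pt n, inCube u → ∀ i : Fin n, ∀ t ∈ Set.Icc (0:ℝ) 1, t ∉ S →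
    ContinuousWithinAt (fun s => A (Function.update u i s)) (Set.Icc (0:ℝ) 1) t

/-- A quasi-copula: a semicopula that is 1-Lipschitz w.r.t. the ℓ¹-norm. -/
def QuasiCopula {n : ℕ} (A : Pt n → ℝ) : Prop :=
  Semicopula A ∧ ∀ x y : Pt n, inCube x → inCube y → |A x - A y| ≤ ∑ i, |x i - y i|

end KIncr


section Aux
open KIncr


lemma toggle_mem {α : Type*} [DecidableEq α] {T S : Finset α} {t0 : α} (ht0 : t0 ∈ T)
    (hS : S ⊆ T) : (if t0 ∈ S then S.erase t0 else insert t0 S) ⊆ T := by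
  split
  · exact (Finset.erase_subset _ _).trans hS
  · exact Finset.insert_subset ht0 hS

lemma toggle_card {α : Type*} [DecidableEq α] {S : Finset α} {t0 : α} :
    (if t0 ∈ S then S.erase t0 else insert t0 S).card % 2 ≠ S.card % 2 := by
  split <;> rename_i h
  · rw [Finset.card_erase_of_mem h]
    have := Finset.card_pos.mpr ⟨t0, h⟩
    omega
  · rw [Finset.card_insert_of_notMem h]; omega

lemma toggle_toggle {α : Type*} [DecidableEq α] {S : Finset α} {t0 : α} :
    (let S' := if t0 ∈ S then S.erase t0 else insert t0 S
     if t0 ∈ S' then S'.erase t0 else insert t0 S') = S := by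
  by_cases h : t0 ∈ S <;> simp [h, Finset.insert_erase, Finset.erase_insert]

lemma parity_count {α : Type*} [DecidableEq α] (T : Finset α) (k : ℕ) (hk : T.card = k)
    (hk1 : 1 ≤ k) :
    (T.powerset.filter fun S => ¬ (S.card % 2 = k % 2)).card = 2 ^ (k - 1) := by
  obtain ⟨t0, ht0⟩ := Finset.card_pos.mp (by omega : 0 < T.card)
  have hsplit : (T.powerset.filter fun S => S.card % 2 = k % 2).card
      + (T.powerset.filter fun S => ¬(S.card % 2 = k % 2)).card = 2 ^ k := by
    rw [Finset.card_filter_add_card_filter_not, Finset.card_powerset, hk]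
  have hbij : (T.powerset.filter fun S => S.card % 2 = k % 2).card
      = (T.powerset.filter fun S => ¬(S.card % 2 = k % 2)).card := by
    apply Finset.card_bij' (i := fun S _ => if t0 ∈ S then S.erase t0 else insert t0 S)
      (j := fun S _ => if t0 ∈ S then S.erase t0 else insert t0 S)
    · intro S _; exact toggle_toggle
    · intro S _; exact toggle_toggle
    · intro S hS
      simp only [Finset.mem_filter, Finset.mem_powerset] at hS ⊢
      exact ⟨toggle_mem ht0 hS.1, by have := @toggle_card _ _ S t0; omega⟩
    · intro S hS
      simp only [Finset.mem_filter, Finset.mem_powerset] at hS ⊢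
      exact ⟨toggle_mem ht0 hS.1, by have := @toggle_card _ _ S t0; omega⟩
  have h2 : 2 ^ k = 2 ^ (k - 1) * 2 := by
    rw [← pow_succ]; congr 1; omega
  omega


section VStruct
variable {n k : ℕ} (Q : Box n)

/-- The corner associated to a subset `S` (coords in `S` get `hi`). -/
noncomputable def cornerF (Q : Box n) (S : Finset (Fin n)) : Pt n :=
  fun i => if i ∈ S then Q.hi i else Q.lo i

lemma mem_vertices_iff_isVertex (hQ : Q.IsKBox k) {v : Pt n} :
    v ∈ Q.vertices ↔ Q.IsVertex v := by
  constructor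
  · intro hv
    obtain ⟨ε, -, rfl⟩ := Finset.mem_image.mp hv
    intro i
    by_cases h : ε i <;> simp [h]
  · intro hv
    apply Finset.mem_image.mpr
    refine ⟨fun i => if v i = Q.hi i then true else false, Finset.mem_univ _, ?_⟩
    funext i
    by_cases h2 : v i = Q.hi i
    · simp [h2]
    · rcases hv i with h | h
      · simpa [h2] using h.symm
      · exact absurd h h2

lemma vertices_eq_image (hQ : Q.IsKBox k) :
    Q.vertices = (Finset.univ.filter (fun i => Q.lo i < Q.hi i)).powerset.image (cornerF Q) := by
  set T := Finset.univ.filter (fun i => Q.lo i < Q.hi i) with hT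
  ext v
  rw [mem_vertices_iff_isVertex Q hQ]
  constructor
  · intro hv
    apply Finset.mem_image.mpr
    refine ⟨T.filter (fun i => v i = Q.hi i ∧ Q.lo i < Q.hi i), ?_, ?_⟩
    · exact Finset.mem_powerset.mpr (Finset.filter_subset _ _)
    · funext i
      unfold cornerF
      by_cases hiT : i ∈ T
      · have hlt : Q.lo i < Q.hi i := (Finset.mem_filter.mp hiT).2
        rcases hv i with h | h
        · rw [if_neg, h]
          simp only [Finset.mem_filter]
          rintro ⟨-, h2, -⟩
          rw [h] at h2; exact absurd h2 (ne_of_lt hlt)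
        · rw [if_pos, h]
          exact Finset.mem_filter.mpr ⟨hiT, h, hlt⟩
      · have heq : Q.lo i = Q.hi i := by
          have h1 : ¬ Q.lo i < Q.hi i := by
            intro h; exact hiT (Finset.mem_filter.mpr ⟨Finset.mem_univ _, h⟩)
          exact le_antisymm (hQ.2.2.1 i) (not_lt.mp h1)
        rw [if_neg (fun hm => hiT (Finset.filter_subset _ _ hm))]
        rcases hv i with h | h
        · exact h.symm
        · rw [h, heq]
  · intro hv
    obtain ⟨S, -, rfl⟩ := Finset.mem_image.mp hv
    intro i
    unfold cornerF
    by_cases h : i ∈ S <;> simp [h]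

end VStruct

section VStruct2
variable {n k : ℕ} {Q : Box n}

lemma cornerF_inj (hQ : Q.IsKBox k) {S S' : Finset (Fin n)}
    (hS : S ⊆ Finset.univ.filter (fun i => Q.lo i < Q.hi i))
    (hS' : S' ⊆ Finset.univ.filter (fun i => Q.lo i < Q.hi i))
    (h : cornerF Q S = cornerF Q S') : S = S' := by
  ext i
  constructor
  · intro hi
    have hlt : Q.lo i < Q.hi i := (Finset.mem_filter.mp (hS hi)).2
    have := congrFun h i
    unfold cornerF at this
    rw [if_pos hi] at this
    by_contra hi'
    rw [if_neg hi'] at this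
    exact absurd this (ne_of_gt hlt)
  · intro hi
    have hlt : Q.lo i < Q.hi i := (Finset.mem_filter.mp (hS' hi)).2
    have := congrFun h i
    unfold cornerF at this
    rw [if_pos hi] at this
    by_contra hi'
    rw [if_neg hi'] at this
    exact absurd this.symm (ne_of_gt hlt)

lemma mult_cornerF (hQ : Q.IsKBox k) {S : Finset (Fin n)}
    (hS : S ⊆ Finset.univ.filter (fun i => Q.lo i < Q.hi i)) :
    Q.mult k (cornerF Q S) = (-1 : ℤ) ^ ((n - S.card) + (n - k)) := by
  have hvx : Q.IsVertex (cornerF Q S) := by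
    intro i
    unfold cornerF
    by_cases h : i ∈ S <;> simp [h]
  rw [Box.mult, if_pos hvx, Box.sign]
  congr 2
  have hfilter : (Finset.univ.filter (fun i => cornerF Q S i = Q.lo i)) = Sᶜ := by
    ext i
    simp only [Finset.mem_filter, Finset.mem_univ, true_and, Finset.mem_compl]
    unfold cornerF
    by_cases h : i ∈ S
    · rw [if_pos h]
      have hlt : Q.lo i < Q.hi i := (Finset.mem_filter.mp (hS h)).2
      simp [h, ne_of_gt hlt, (ne_of_gt hlt).symm]
    · simp [h]
  rw [hfilter, Finset.card_compl, Fintype.card_fin]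

lemma mult_cornerF_neg_iff (hQ : Q.IsKBox k) (hk1 : 1 ≤ k) (hkn : k ≤ n)
    {S : Finset (Fin n)}
    (hS : S ⊆ Finset.univ.filter (fun i => Q.lo i < Q.hi i)) :
    Q.mult k (cornerF Q S) = -1 ↔ ¬ (S.card % 2 = k % 2) := by
  rw [mult_cornerF hQ hS]
  have hSk : S.card ≤ k := by
    calc S.card ≤ (Finset.univ.filter (fun i => Q.lo i < Q.hi i)).card :=
          Finset.card_le_card hS
      _ = k := hQ.2.2.2
  set e := (n - S.card) + (n - k) with he
  have hiff : Odd e ↔ ¬ (S.card % 2 = k % 2) := by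
    rw [Nat.odd_iff]; omega
  constructor
  · intro h
    rcases Nat.even_or_odd e with hev | hod
    · rw [hev.neg_one_pow] at h; norm_num at h
    · exact hiff.mp hod
  · intro h
    exact (hiff.mpr h).neg_one_pow

end VStruct2

lemma card_negverts {n k : ℕ} {Q : Box n} (hQ : Q.IsKBox k) (hk1 : 1 ≤ k) (hkn : k ≤ n) :
    (Q.vertices.filter (fun u => Q.mult k u = -1)).card = 2 ^ (k - 1) := by
  set T := Finset.univ.filter (fun i => Q.lo i < Q.hi i) with hT
  rw [vertices_eq_image Q hQ, Finset.filter_image]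
  have hcong : T.powerset.filter (fun S => Q.mult k (cornerF Q S) = -1)
      = T.powerset.filter (fun S => ¬ (S.card % 2 = k % 2)) := by
    apply Finset.filter_congr
    intro S hS
    exact mult_cornerF_neg_iff hQ hk1 hkn (Finset.mem_powerset.mp hS)
  rw [hcong, Finset.card_image_of_injOn, parity_count T k hQ.2.2.2 hk1]
  intro S hS S' hS' h
  simp only [Finset.coe_filter, Set.mem_setOf_eq, Finset.mem_powerset] at hS hS'
  exact cornerF_inj hQ hS.1 hS'.1 h

/-- Key construction: a `k`-box with vertices in the mesh on which `u` is a
vertex of multiplicity `+1`. -/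
lemma exists_posbox {n k : ℕ} (hk1 : 1 ≤ k) (hkn : k ≤ n)
    (δ : Fin n → Set ℝ)
    (hδ : ∀ i, δ i ⊆ Set.Icc (0:ℝ) 1 ∧ (δ i).Countable ∧ (δ i).Infinite ∧
      Set.Icc (0:ℝ) 1 ⊆ closure (δ i) ∧ (0:ℝ) ∈ δ i ∧ (1:ℝ) ∈ δ i)
    (D : Set (Pt n)) (hDeq : D = {x : Pt n | ∀ i, x i ∈ δ i})
    (u : Pt n) (huD : u ∈ D) (j0 : Fin n) (h0 : 0 < u j0) (h1 : u j0 < 1) :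
    ∃ R : Box n, R.IsKBox k ∧ (∀ w ∈ R.vertices, w ∈ D) ∧ R.mult k u = 1 := by
  rw [hDeq] at huD
  have huδ : ∀ i, u i ∈ δ i := huD
  have huI : ∀ i, u i ∈ Set.Icc (0:ℝ) 1 := fun i => (hδ i).1 (huδ i)
  -- choose the coordinate set K
  obtain ⟨K, hj0K, -, hKcard⟩ :=
    Finset.exists_subsuperset_card_eq (Finset.subset_univ {j0})
      (by simpa using hk1) (by simpa using hkn)
  have hj0K : j0 ∈ K := hj0K (Finset.mem_singleton_self j0)
  -- choose alternative endpoints t j ≠ u j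
  have htex : ∀ j : Fin n, ∃ y, y ∈ δ j ∧ y ≠ u j := by
    intro j
    obtain ⟨y, hy⟩ := ((hδ j).2.2.1.diff (Set.finite_singleton (u j))).nonempty
    exact ⟨y, hy.1, hy.2⟩
  choose t ht1 ht2 using htex
  -- points of δ j0 strictly below and above u j0
  have hbel : ∃ y ∈ δ j0, y < u j0 := by
    have hmem : u j0 / 2 ∈ Set.Icc (0:ℝ) 1 := by constructor <;> nlinarith [huI j0]
    have := (hδ j0).2.2.2.1 hmem
    rw [Metric.mem_closure_iff] at this
    obtain ⟨y, hy, hd⟩ := this (u j0 / 2) (by linarith)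
    refine ⟨y, hy, ?_⟩
    rw [Real.dist_eq, abs_lt] at hd
    linarith
  have habo : ∃ y ∈ δ j0, u j0 < y := by
    have hmem : (u j0 + 1) / 2 ∈ Set.Icc (0:ℝ) 1 := by constructor <;> nlinarith [huI j0]
    have := (hδ j0).2.2.2.1 hmem
    rw [Metric.mem_closure_iff] at this
    obtain ⟨y, hy, hd⟩ := this ((1 - u j0) / 2) (by linarith)
    refine ⟨y, hy, ?_⟩
    rw [Real.dist_eq, abs_lt] at hd
    linarith
  obtain ⟨a, haδ, ha⟩ := hbel
  obtain ⟨b, hbδ, hb⟩ := habo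
  set p' := ((K.erase j0).filter (fun j => u j < t j)).card with hp'
  set d : Fin n → ℝ := fun j =>
    if j = j0 then (if p' % 2 = 0 then a else b) else if j ∈ K then t j else u j with hd
  have hd_ne : ∀ j ∈ K, d j ≠ u j := by
    intro j hj
    by_cases hjj : j = j0
    · subst hjj
      simp only [hd, if_pos rfl]
      split
      · exact ne_of_lt ha
      · exact ne_of_gt hb
    · simp only [hd, if_neg hjj, if_pos hj]
      exact ht2 j
  have hd_mem : ∀ j, d j ∈ δ j := by
    intro j
    by_cases hjj : j = j0
    · subst hjj
      simp only [hd, if_pos rfl]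
      split
      · exact haδ
      · exact hbδ
    · simp only [hd, if_neg hjj]
      split
      · exact ht1 j
      · exact huδ j
  have hd_out : ∀ j ∉ K, d j = u j := by
    intro j hj
    have hjj : j ≠ j0 := fun h => hj (h ▸ hj0K)
    simp [hd, hjj, hj]
  have hdI : ∀ j, d j ∈ Set.Icc (0:ℝ) 1 := fun j => (hδ j).1 (hd_mem j)
  refine ⟨⟨fun j => min (u j) (d j), fun j => max (u j) (d j)⟩, ?_, ?_, ?_⟩
  · refine ⟨?_, ?_, fun i => min_le_max, ?_⟩
    · intro i
      exact ⟨le_min (huI i).1 (hdI i).1, (min_le_left _ _).trans (huI i).2⟩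
    · intro i
      exact ⟨(huI i).1.trans (le_max_left _ _), max_le (huI i).2 (hdI i).2⟩
    · have : Finset.univ.filter (fun i => min (u i) (d i) < max (u i) (d i)) = K := by
        ext j
        simp only [Finset.mem_filter, Finset.mem_univ, true_and, min_lt_max]
        constructor
        · intro h
          by_contra hj
          exact h (hd_out j hj).symm
        · intro hj
          exact (hd_ne j hj).symm
      rw [this, hKcard]
  · intro w hw
    obtain ⟨ε, -, rfl⟩ := Finset.mem_image.mp hw
    rw [hDeq]
    intro i
    by_cases hε : ε i
    · simp only [hε, if_true]
      rcases max_choice (u i) (d i) with h | h <;> rw [h]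
      · exact huδ i
      · exact hd_mem i
    · simp only [hε, if_false]
      rcases min_choice (u i) (d i) with h | h <;> rw [h]
      · exact huδ i
      · exact hd_mem i
  · have hvx : Box.IsVertex ⟨fun j => min (u j) (d j), fun j => max (u j) (d j)⟩ u := by
      intro i
      rcases le_total (u i) (d i) with h | h
      · exact Or.inl (min_eq_left h).symm
      · exact Or.inr (max_eq_left h).symm
    rw [Box.mult, if_pos hvx, Box.sign]
    have hfe : Finset.univ.filter (fun i => u i = min (u i) (d i))
        = Kᶜ ∪ K.filter (fun j => u j < d j) := by
      ext i
      simp only [Finset.mem_filter, Finset.mem_univ, true_and, Finset.mem_union,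
        Finset.mem_compl]
      constructor
      · intro h
        by_cases hi : i ∈ K
        · refine Or.inr ⟨hi, ?_⟩
          have hle : u i ≤ d i := min_eq_left_iff.mp h.symm
          exact lt_of_le_of_ne hle (Ne.symm (hd_ne i hi))
        · exact Or.inl hi
      · rintro (hi | ⟨hi, hlt⟩)
        · rw [hd_out i hi, min_self]
        · exact (min_eq_left hlt.le).symm
    have hdisj : Disjoint Kᶜ (K.filter (fun j => u j < d j)) :=
      Finset.disjoint_left.mpr (fun x hx hx2 => (Finset.mem_compl.mp hx) (Finset.filter_subset _ _ hx2))
    have hcompl : (Kᶜ : Finset (Fin n)).card = n - k := by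
      rw [Finset.card_compl, hKcard, Fintype.card_fin]
    -- parity of p
    have hKsplit : K = insert j0 (K.erase j0) := (Finset.insert_erase hj0K).symm
    have hfilter_erase : (K.erase j0).filter (fun j => u j < d j)
        = (K.erase j0).filter (fun j => u j < t j) := by
      apply Finset.filter_congr
      intro j hj
      have hj1 : j ≠ j0 := Finset.ne_of_mem_erase hj
      have hj2 : j ∈ K := Finset.mem_of_mem_erase hj
      simp [hd, hj1, hj2]
    have hp_even : (K.filter (fun j => u j < d j)).card % 2 = 0 := by
      rw [hKsplit, Finset.filter_insert]
      by_cases hpar : p' % 2 = 0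
      · have : ¬ u j0 < d j0 := by
          simp only [hd, if_pos rfl, if_pos hpar]
          exact not_lt.mpr ha.le
        rw [if_neg this, hfilter_erase, ← hp', hpar]
      · have : u j0 < d j0 := by
          simp only [hd, if_pos rfl, if_neg hpar]
          exact hb
        rw [if_pos this, Finset.card_insert_of_notMem
          (fun h => Finset.notMem_erase j0 K (Finset.filter_subset _ _ h)),
          hfilter_erase, ← hp']
        omega
    rw [hfe, Finset.card_union_of_disjoint hdisj, hcompl]
    have : Even ((n - k + (K.filter (fun j => u j < d j)).card) + (n - k)) := by
      rw [Nat.even_iff]; omega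
    exact this.neg_one_pow

end Aux

open KIncr
/-- Lemma 5.3: dual of Lemma 4.3, for the construction from
 above. -/
theorem stmt12 (n k : ℕ) (hn : 1 ≤ n) (hk1 : 1 ≤ k) (hkn : k ≤ n)
    (D : Set (Pt n)) (hD : IsMesh D) (A C : Pt n → ℝ)
    (hAI : ∀ u ∈ D, A u ∈ Set.Icc (0:ℝ) 1) (hCI : ∀ u ∈ D, C u ∈ Set.Icc (0:ℝ) 1)
    (hAC : ∀ u ∈ D, A u ≤ C u)
    (hL : ∀ DU : Multiset (Box n), memRk k D DU → 0 ≤ Lk k A C DU)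
    (hdelta : ∀ d ∈ D, deltaK k D A C d = 0)
    (hvert : ∀ w : Pt n, isCubeVertex w → A w = C w)
    (Q : Box n) (hQ : Q.IsKBox k) (hQD : ∀ w ∈ Q.vertices, w ∈ D)
    (v : ℝ) (hv : Vvol k C Q = v) (hvneg : v < 0) :
    ∃ s : ℕ, 1 ≤ s ∧ s ≤ 2 ^ (k - 1) ∧
      ∃ x : Fin (2 ^ (k - 1)) → Pt n, Function.Injective x ∧
        (∀ i, x i ∈ Q.vertices ∧ Q.mult k (x i) = -1) ∧
        (∀ u ∈ Q.vertices, Q.mult k u = -1 → ∃ i, x i = u) ∧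
        (∀ i : Fin (2 ^ (k - 1)), (i : ℕ) < s →
          A (x i) < C (x i) ∧
          ∃ DU : Multiset (Box n), memRk k D DU ∧ 0 < multDU k DU (x i) ∧
            Lk k A C DU / |(multDU k DU (x i) : ℝ)| < |v| / (s : ℝ)) ∧
        (∀ i : Fin (2 ^ (k - 1)), s ≤ (i : ℕ) → A (x i) = C (x i)) := by
  classical
  obtain ⟨δ, hδ, hDeq⟩ := hD
  set N := Q.vertices.filter (fun u => Q.mult k u = -1) with hN
  have hNcard : N.card = 2 ^ (k - 1) := card_negverts hQ hk1 hkn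
  set N1 := N.filter (fun u => A u < C u) with hN1
  have hN1N : N1 ⊆ N := Finset.filter_subset _ _
  set s := N1.card with hs
  -- multiplicities on vertices are ±1
  have hmultv : ∀ u ∈ Q.vertices, Q.mult k u = Q.sign k u := by
    intro u hu
    rw [Box.mult, if_pos ((mem_vertices_iff_isVertex Q hQ).mp hu)]
  have hmultpm : ∀ u ∈ Q.vertices, Q.mult k u = 1 ∨ Q.mult k u = -1 := by
    intro u hu
    rw [hmultv u hu, Box.sign]
    rcases Nat.even_or_odd ((Finset.univ.filter (fun i => u i = Q.lo i)).card + (n - k)) with h | h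
    · exact Or.inl h.neg_one_pow
    · exact Or.inr h.neg_one_pow
  have hQmem : memRk k D {Q} := by
    intro R hR
    rw [Multiset.mem_singleton] at hR
    subst hR
    exact ⟨hQ, hQD⟩
  have hLQ := hL {Q} hQmem
  have hmultQ : ∀ u, multDU k {Q} u = Q.mult k u := by
    intro u; simp [multDU]
  have hLkQ : Lk k A C {Q} = ∑ u ∈ Q.vertices,
      (if 0 < Q.mult k u then (Q.mult k u : ℝ) * C u
       else if Q.mult k u < 0 then (Q.mult k u : ℝ) * A u else 0) := by
    rw [Lk]
    have hB : (({Q} : Multiset (Box n)).toFinset.biUnion Box.vertices) = Q.vertices := by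
      simp
    rw [hB]
    exact Finset.sum_congr rfl (fun u _ => by rw [hmultQ u])
  have hkey : Vvol k C Q - Lk k A C {Q} = ∑ u ∈ N, (A u - C u) := by
    rw [hLkQ, Vvol, ← Finset.sum_sub_distrib, hN, Finset.sum_filter]
    apply Finset.sum_congr rfl
    intro u hu
    have hsgn := (hmultv u hu).symm
    rw [hsgn]
    rcases hmultpm u hu with h | h <;> rw [h] <;> norm_num <;> ring
  have hND : ∀ u ∈ N, u ∈ D := fun u hu => hQD u (Finset.mem_filter.mp hu).1
  have hsum_pos : 0 < ∑ u ∈ N, (C u - A u) := by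
    have h4 : ∑ u ∈ N, (C u - A u) = -(∑ u ∈ N, (A u - C u)) := by
      rw [← Finset.sum_neg_distrib]
      exact Finset.sum_congr rfl (fun u _ => by ring)
    rw [h4, ← hkey, hv]
    linarith
  have hs1 : 1 ≤ s := by
    by_contra hc
    have hN1e : N1 = ∅ := Finset.card_eq_zero.mp (by omega)
    have hzero : ∑ u ∈ N, (C u - A u) = 0 := by
      apply Finset.sum_eq_zero
      intro u hu
      have h5 : ¬ A u < C u := by
        intro h
        exact (Finset.eq_empty_iff_forall_notMem.mp hN1e u)
          (Finset.mem_filter.mpr ⟨hu, h⟩)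
      have := hAC u (hND u hu)
      linarith
    linarith
  have hs2 : s ≤ 2 ^ (k - 1) := by
    rw [← hNcard]
    exact Finset.card_le_card hN1N
  -- the enumeration list: N1 first, then N \ N1
  set l : List (Pt n) := N1.toList ++ (N \ N1).toList with hl
  have hlen1 : N1.toList.length = s := Finset.length_toList _
  have hlen2 : (N \ N1).toList.length = 2 ^ (k - 1) - s := by
    rw [Finset.length_toList, Finset.card_sdiff_of_subset hN1N, hNcard]
  have hlen : l.length = 2 ^ (k - 1) := by
    rw [hl, List.length_append, hlen1, hlen2]
    omega
  have hnodup : l.Nodup := by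
    apply List.Nodup.append (Finset.nodup_toList _) (Finset.nodup_toList _)
    intro a ha hb
    rw [Finset.mem_toList] at ha hb
    exact (Finset.mem_sdiff.mp hb).2 ha
  have hmeml : ∀ a ∈ l, a ∈ N := by
    intro a ha
    rcases List.mem_append.mp ha with h | h
    · exact hN1N (Finset.mem_toList.mp h)
    · exact (Finset.mem_sdiff.mp (Finset.mem_toList.mp h)).1
  refine ⟨s, hs1, hs2, fun i => l.get (Fin.cast hlen.symm i), ?_, ?_, ?_, ?_, ?_⟩
  · -- injectivity
    intro i j hij
    have h2 := (List.nodup_iff_injective_get.mp hnodup) hij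
    have h3 : (Fin.cast hlen.symm i).val = (Fin.cast hlen.symm j).val := by rw [h2]
    exact Fin.ext h3
  · -- all values in Q.vertices with mult -1
    intro i
    have hmem : l.get (Fin.cast hlen.symm i) ∈ N := hmeml _ (List.get_mem l _)
    exact Finset.mem_filter.mp hmem
  · -- surjectivity onto negative vertices
    intro u hu hmu
    have huN : u ∈ N := Finset.mem_filter.mpr ⟨hu, hmu⟩
    have hul : u ∈ l := by
      by_cases h : u ∈ N1
      · exact List.mem_append.mpr (Or.inl (Finset.mem_toList.mpr h))
      · exact List.mem_append.mpr
          (Or.inr (Finset.mem_toList.mpr (Finset.mem_sdiff.mpr ⟨huN, h⟩)))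
    obtain ⟨idx, hidx⟩ := List.mem_iff_get.mp hul
    exact ⟨Fin.cast hlen idx, hidx⟩
  · -- the first s entries
    intro i hi
    set u := l.get (Fin.cast hlen.symm i) with hu
    have hidx : (i : ℕ) < N1.toList.length := by rw [hlen1]; exact hi
    have hxi : u ∈ N1 := by
      have hgl : l.get (Fin.cast hlen.symm i) = N1.toList.get ⟨i, hidx⟩ := by
        rw [List.get_eq_getElem, List.get_eq_getElem]
        exact List.getElem_append_left hidx
      rw [hu, hgl]
      exact Finset.mem_toList.mp (List.get_mem _ _)
    have hAu : A u < C u := (Finset.mem_filter.mp hxi).2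
    have huN : u ∈ N := hN1N hxi
    have huD : u ∈ D := hND u huN
    refine ⟨hAu, ?_⟩
    -- u is not a cube vertex
    have hncv : ¬ isCubeVertex u := fun h => absurd (hvert u h) (ne_of_lt hAu)
    rw [isCubeVertex] at hncv
    push_neg at hncv
    obtain ⟨j0, hj01, hj02⟩ := hncv
    have huI : ∀ i, u i ∈ Set.Icc (0:ℝ) 1 := by
      intro i
      apply (hδ i).1
      rw [hDeq] at huD
      exact huD i
    have h0' : 0 < u j0 := lt_of_le_of_ne (huI j0).1 (Ne.symm hj01)
    have h1' : u j0 < 1 := lt_of_le_of_ne (huI j0).2 hj02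
    obtain ⟨R, hRk, hRD, hRmult⟩ :=
      exists_posbox hk1 hkn δ hδ D hDeq u huD j0 h0' h1'
    set SS := {r : ℝ | ∃ DU : Multiset (Box n), memRk k D DU ∧ 0 < multDU k DU u ∧
      r = Lk k A C DU / |(multDU k DU u : ℝ)|} with hSS
    have hmemR : memRk k D {R} := by
      intro R' hR'
      rw [Multiset.mem_singleton] at hR'
      subst hR'
      exact ⟨hRk, hRD⟩
    have hmultR : multDU k {R} u = 1 := by simp [multDU, hRmult]
    have hSne : SS.Nonempty :=
      ⟨_, {R}, hmemR, by rw [hmultR]; norm_num, rfl⟩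
    have hS0 : ∀ r ∈ SS, 0 ≤ r := by
      rintro r ⟨DU, hm, hp, rfl⟩
      exact div_nonneg (hL DU hm) (abs_nonneg _)
    have hPdef : Ppos k D A C u = sInf SS := rfl
    have hPpos0 : sInf SS = 0 := by
      have hd0 := hdelta u huD
      rw [deltaK, hPdef] at hd0
      have hge : 0 ≤ sInf SS := Real.sInf_nonneg hS0
      have hCA : 0 < C u - A u := by linarith
      rcases le_or_gt (sInf SS) (C u - A u) with h | h
      · rwa [min_eq_left h] at hd0
      · rw [min_eq_right h.le] at hd0
        linarith
    have hεpos : 0 < |v| / (s : ℝ) := by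
      apply div_pos (abs_pos.mpr (ne_of_lt hvneg))
      exact_mod_cast hs1
    obtain ⟨r, hrS, hrlt⟩ := exists_lt_of_csInf_lt hSne (by rw [hPpos0]; exact hεpos)
    obtain ⟨DU, hm1, hm2, rfl⟩ := hrS
    exact ⟨DU, hm1, hm2, hrlt⟩
  · -- the remaining entries
    intro i hi
    set u := l.get (Fin.cast hlen.symm i) with hu
    have hil : (i : ℕ) < l.length := by rw [hlen]; exact i.2
    have hidx : (i : ℕ) - N1.toList.length < (N \ N1).toList.length := by
      rw [hlen1, hlen2]
      rw [hl, List.length_append, hlen1, hlen2] at hil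
      omega
    have hxi : u ∈ N \ N1 := by
      have hge : N1.toList.length ≤ (i : ℕ) := by rw [hlen1]; exact hi
      have hgl : l.get (Fin.cast hlen.symm i)
          = (N \ N1).toList.get ⟨(i : ℕ) - N1.toList.length, hidx⟩ := by
        rw [List.get_eq_getElem, List.get_eq_getElem]
        exact List.getElem_append_right hge
      rw [hu, hgl]
      exact Finset.mem_toList.mp (List.get_mem _ _)
    have huN : u ∈ N := (Finset.mem_sdiff.mp hxi).1
    have hnlt : ¬ A u < C u := by
      intro h
      exact (Finset.mem_sdiff.mp hxi).2 (Finset.mem_filter.mpr ⟨huN, h⟩)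
    have := hAC u (hND u huN)
    linarith
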